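/- Let H be a transitive permutation group on a finite set B with a distinguished point 1 ∈ B, let G = C₂ ≀ H = C₂^B ⋊ H, and let Stab_G be the stabilizer in G of the point (1,1) ∈ {1,2} × B, so Stab_G = C₂^{B∖{1}} ⋊ Stab_H(1). If M is a subgroup of G properly containing Stab_G, then M contains the subgroup C₂^B ⋊ Stab_H(1). -/

import Mathlib

private lemma zmod2_add_self (a : ZMod 2) : a + a = 0 := by
  fin_cases a <;> decide

/-- The element `x ⋊ s` of the wreath product `C₂ ≀ H`, realized as a permutation of
`ZMod 2 × B` (the set `{1,2} × B`): blocks are permuted by `s` and then the two points of the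
block over `b` are swapped iff the coordinate `x b` is nonzero. -/
def wreathPerm {B : Type} (x : B → ZMod 2) (s : Equiv.Perm B) : Equiv.Perm (ZMod 2 × B) where
  toFun p := (p.1 + x (s p.2), s p.2)
  invFun p := (p.1 + x p.2, s.symm p.2)
  left_inv p := by
    obtain ⟨i, b⟩ := p
    simp [add_assoc, zmod2_add_self]
  right_inv p := by
    obtain ⟨i, b⟩ := p
    simp [add_assoc, zmod2_add_self]

lemma wreathPerm_apply {B : Type} (x : B → ZMod 2) (s : Equiv.Perm B) (p : ZMod 2 × B) :
    wreathPerm x s p = (p.1 + x (s p.2), s p.2) := rfl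

lemma wreathPerm_one {B : Type} : wreathPerm (fun _ : B => (0 : ZMod 2)) 1 = 1 := by
  apply Equiv.ext
  intro p
  simp [wreathPerm_apply]

lemma wreathPerm_mul {B : Type} (x y : B → ZMod 2) (s t : Equiv.Perm B) :
    wreathPerm x s * wreathPerm y t
      = wreathPerm (fun c => x c + y (s⁻¹ c)) (s * t) := by
  apply Equiv.ext
  intro p
  simp [wreathPerm_apply, Equiv.Perm.mul_apply]
  ring

lemma wreathPerm_inv {B : Type} (x : B → ZMod 2) (s : Equiv.Perm B) :
    (wreathPerm x s)⁻¹ = wreathPerm (fun c => x (s c)) s⁻¹ := by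
  apply inv_eq_of_mul_eq_one_right
  rw [wreathPerm_mul]
  have h1 : (fun c => x c + x (s (s⁻¹ c))) = fun _ : B => (0 : ZMod 2) := by
    funext c
    simp [zmod2_add_self]
  rw [h1]
  rw [mul_inv_cancel]
  exact wreathPerm_one

/-- If a subgroup `M` of `G = C₂ ≀ H` properly contains the stabilizer
`Stab_G((1,1)) = C₂^{B∖{b₁}} ⋊ Stab_H(b₁)` of the point `(1, b₁)`, then `M` contains
`C₂^B ⋊ Stab_H(b₁)`. -/
theorem overgroup_of_point_stabilizer_in_wreath
    {B : Type} [Fintype B] [DecidableEq B]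
    (H : Subgroup (Equiv.Perm B))
    (htrans : ∀ a b : B, ∃ s ∈ H, s a = b)
    (b₁ : B)
    (M : Subgroup (Equiv.Perm (ZMod 2 × B)))
    (hsub : ∀ g ∈ M, ∃ (x : B → ZMod 2) (s : Equiv.Perm B), s ∈ H ∧ g = wreathPerm x s)
    (hstab : ∀ (x : B → ZMod 2) (s : Equiv.Perm B),
      s ∈ H → s b₁ = b₁ → x b₁ = 0 → wreathPerm x s ∈ M)
    (hproper : ∃ g ∈ M, g (0, b₁) ≠ (0, b₁)) :
    ∀ (x : B → ZMod 2) (s : Equiv.Perm B), s ∈ H → s b₁ = b₁ → wreathPerm x s ∈ M := by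
  classical
  have zcases : ∀ a : ZMod 2, a ≠ 0 → a = 1 := by decide
  obtain ⟨g, hgM, hg⟩ := hproper
  obtain ⟨x, s, hsH, rfl⟩ := hsub g hgM
  set d : B → ZMod 2 := fun c => if c = b₁ then 1 else 0 with hd
  have he : wreathPerm d 1 ∈ M := by
    by_cases hsb : s b₁ = b₁
    · have hx1 : x b₁ = 1 := by
        apply zcases
        intro h0
        apply hg
        rw [wreathPerm_apply]
        simp [hsb, h0]
      set y := Function.update x b₁ 0 with hy
      have hyM : wreathPerm y s ∈ M :=
        hstab y s hsH hsb (Function.update_self _ _ _)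
      have hmem := M.mul_mem hgM (M.inv_mem hyM)
      have heq : wreathPerm x s * (wreathPerm y s)⁻¹ = wreathPerm d 1 := by
        rw [wreathPerm_inv, wreathPerm_mul]
        congr 1
        · funext c
          simp only [Equiv.Perm.inv_def, Equiv.apply_symm_apply]
          by_cases hc : c = b₁
          · subst hc
            simp [hy, hd, hx1, Function.update_self]
          · simp [hy, hd, hc, Function.update_of_ne hc, zmod2_add_self]
        · group
      rwa [heq] at hmem
    · set z : B → ZMod 2 := fun c => if c = s b₁ then 1 else 0 with hz
      have hzb : z b₁ = 0 := by
        simp only [hz]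
        rw [if_neg]
        intro h
        exact hsb h.symm
      have hzM : wreathPerm z 1 ∈ M := hstab z 1 H.one_mem rfl hzb
      have hmem := M.mul_mem (M.mul_mem (M.inv_mem hgM) hzM) hgM
      have heq : (wreathPerm x s)⁻¹ * wreathPerm z 1 * wreathPerm x s
          = wreathPerm d 1 := by
        rw [wreathPerm_inv, wreathPerm_mul, wreathPerm_mul]
        have hperm : s⁻¹ * 1 * s = 1 := by group
        rw [hperm]
        congr 1
        funext c
        have h1 : (s⁻¹)⁻¹ c = s c := by simp
        have h2 : (s⁻¹ * 1)⁻¹ c = s c := by simp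
        rw [h1, h2]
        rw [add_comm (x (s c)), add_assoc, zmod2_add_self, add_zero]
        by_cases hc : c = b₁
        · subst hc
          simp [hz, hd]
        · have hne : s c ≠ s b₁ := fun h => hc (s.injective h)
          simp [hz, hd, hne, hc]
      rwa [heq] at hmem
  intro x s hsH' hsb'
  by_cases hx : x b₁ = 0
  · exact hstab _ _ hsH' hsb' hx
  · set y := Function.update x b₁ 0 with hy
    have hyM : wreathPerm y s ∈ M :=
      hstab y s hsH' hsb' (Function.update_self _ _ _)
    have hmem := M.mul_mem he hyM
    have heq : wreathPerm d 1 * wreathPerm y s = wreathPerm x s := by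
      rw [wreathPerm_mul]
      have hperm : (1 : Equiv.Perm B) * s = s := one_mul s
      rw [hperm]
      congr 1
      funext c
      have h1 : (1 : Equiv.Perm B)⁻¹ c = c := rfl
      rw [h1]
      by_cases hc : c = b₁
      · subst hc
        simp [hd, hy, Function.update_self, zcases _ hx]
      · simp [hd, hy, hc, Function.update_of_ne hc]
    rwa [heq] at hmem
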